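/- Let α, β ≥ 0 be real numbers, l1, l2 nonnegative integers with m = l1+l2 ≥ 1, and let ξ_1 < ξ_2 < ... < ξ_m be points of (0,1) such that the monic polynomial p(t) = (t−ξ_1)⋯(t−ξ_m) satisfies sup_{t ∈ [0,1]} t^α (1−t)^β |p(t)| = E_m(α,β), and such that there exist m+1 points 0 ≤ η_0 < η_1 < ... < η_m ≤ 1 with η_k^α (1−η_k)^β p(η_k) = (−1)^{m−k} E_m(α,β) for all k. Then sup_{(t1,t2) ∈ Δ} t1^α t2^β · |(t1−ξ_1)⋯(t1−ξ_{l1})| · |(1−t2−ξ_{l1+1})⋯(1−t2−ξ_m)| = E_m(α,β). -/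

import Mathlib

/-- The weighted sup norm `sup_{t ∈ [0,1]} t^α (1-t)^β |p(t)|` (real `rpow`, so `0^0 = 1`). -/
noncomputable def intervalSup (a b : ℝ) (p : Polynomial ℝ) : ℝ :=
  sSup ((fun t : ℝ => t ^ a * (1 - t) ^ b * |p.eval t|) '' Set.Icc (0 : ℝ) 1)

/-- The 1-D weighted Chebyshev constant `E_m(α,β)`: infimum over monic real polynomials of
degree `m` of `sup_{t ∈ [0,1]} t^α (1-t)^β |p(t)|`. -/
noncomputable def devE (m : ℕ) (a b : ℝ) : ℝ :=
  sInf {r : ℝ | ∃ p : Polynomial ℝ, p.Monic ∧ p.natDegree = m ∧ r = intervalSup a b p}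

/-- The standard triangle `Δ = {(t₁,t₂) : t₁ ≥ 0, t₂ ≥ 0, t₁ + t₂ ≤ 1}`. -/
def triangle : Set (ℝ × ℝ) := {t : ℝ × ℝ | 0 ≤ t.1 ∧ 0 ≤ t.2 ∧ t.1 + t.2 ≤ 1}

lemma interlace_aux (m : ℕ) (ξ : ℕ → ℝ) (hξ : ∀ i j, i < j → j < m → ξ i < ξ j)
    (η : ℕ → ℝ) (hη : ∀ k l, k < l → l ≤ m → η k < η l)
    (hroot : ∀ k < m, ∃ i < m, η k < ξ i ∧ ξ i < η (k + 1)) :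
    ∀ k < m, η k < ξ k ∧ ξ k < η (k + 1) := by
  classical
  have hroot' : ∀ k, ∃ i, k < m → i < m ∧ η k < ξ i ∧ ξ i < η (k + 1) := by
    intro k
    by_cases hk : k < m
    · obtain ⟨i, h1, h2, h3⟩ := hroot k hk
      exact ⟨i, fun _ => ⟨h1, h2, h3⟩⟩
    · exact ⟨0, fun h => absurd h hk⟩
  choose i hi using hroot'
  have hmono : ∀ k k', k < k' → k' < m → i k < i k' := by
    intro k k' hkk' hk'
    have hk : k < m := by omega
    obtain ⟨hi1, hl1, hr1⟩ := hi k hk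
    obtain ⟨hi2, hl2, hr2⟩ := hi k' hk'
    have h1 : ξ (i k) < ξ (i k') := by
      calc ξ (i k) < η (k + 1) := hr1
        _ ≤ η k' := by
          rcases Nat.lt_or_ge (k+1) k' with h | h
          · exact le_of_lt (hη _ _ h (by omega))
          · have : k + 1 = k' := by omega
            rw [this]
        _ < ξ (i k') := hl2
    by_contra hcon
    push_neg at hcon
    rcases Nat.lt_or_ge (i k') (i k) with h | h
    · exact absurd (hξ _ _ h hi1) (by linarith)
    · have : i k' = i k := by omega
      rw [this] at h1; linarith
  have hlow : ∀ k, k < m → k ≤ i k := by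
    intro k
    induction k with
    | zero => intro _; omega
    | succ n ih =>
      intro hk
      have h1 : n < m := by omega
      have := hmono n (n+1) (by omega) hk
      have := ih h1
      omega
  have hstep : ∀ d k, k + d < m → i k + d ≤ i (k + d) := by
    intro d
    induction d with
    | zero => intro k hk; simp
    | succ n ih =>
      intro k hk
      have h2 := ih k (by omega)
      have h3 := hmono (k + n) (k + n + 1) (by omega) (by omega)
      have h4 : k + (n+1) = k + n + 1 := by omega
      rw [h4]
      omega
  have hhigh : ∀ k, k < m → i k ≤ k := by
    intro k hk
    have h2 := hstep (m - 1 - k) k (by omega)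
    have h3 : k + (m - 1 - k) = m - 1 := by omega
    have h4 := (hi (m-1) (by omega)).1
    rw [h3] at h2
    omega
  intro k hk
  have hik : i k = k := le_antisymm (hhigh k hk) (hlow k hk)
  obtain ⟨h1, h2, h3⟩ := hi k hk
  rw [hik] at h2 h3
  exact ⟨h2, h3⟩

lemma f_monotone (a : ℝ) (ha : 0 ≤ a) (ξ : ℕ → ℝ) (l1 : ℕ) {u v : ℝ}
    (hu : 0 ≤ u) (huv : u ≤ v) (hroots : ∀ i ∈ Finset.range l1, ξ i ≤ u) :
    u ^ a * |∏ i ∈ Finset.range l1, (u - ξ i)| ≤ v ^ a * |∏ i ∈ Finset.range l1, (v - ξ i)| := by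
  have e : ∀ (w : ℝ), (∀ i ∈ Finset.range l1, ξ i ≤ w) →
      |∏ i ∈ Finset.range l1, (w - ξ i)| = ∏ i ∈ Finset.range l1, (w - ξ i) := by
    intro w hw
    rw [Finset.abs_prod]
    exact Finset.prod_congr rfl fun i hi => abs_of_nonneg (by linarith [hw i hi])
  rw [e u hroots, e v (fun i hi => le_trans (hroots i hi) huv)]
  apply mul_le_mul (Real.rpow_le_rpow hu huv ha)
    (Finset.prod_le_prod (fun i hi => by linarith [hroots i hi]) (fun i hi => by linarith))
    (Finset.prod_nonneg fun i hi => by linarith [hroots i hi])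
    (Real.rpow_nonneg (by linarith) a)

lemma g_antitone (b : ℝ) (hb : 0 ≤ b) (ξ : ℕ → ℝ) (l1 m : ℕ) {u v : ℝ}
    (hu : 0 ≤ u) (huv : u ≤ v) (hv1 : v ≤ 1) (hroots : ∀ i ∈ Finset.Ico l1 m, v ≤ ξ i) :
    (1 - v) ^ b * |∏ i ∈ Finset.Ico l1 m, (v - ξ i)| ≤
      (1 - u) ^ b * |∏ i ∈ Finset.Ico l1 m, (u - ξ i)| := by
  have e : ∀ (w : ℝ), (∀ i ∈ Finset.Ico l1 m, w ≤ ξ i) →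
      |∏ i ∈ Finset.Ico l1 m, (w - ξ i)| = ∏ i ∈ Finset.Ico l1 m, (ξ i - w) := by
    intro w hw
    rw [Finset.abs_prod]
    exact Finset.prod_congr rfl fun i hi => by
      rw [abs_sub_comm]; exact abs_of_nonneg (by linarith [hw i hi])
  rw [e v hroots, e u (fun i hi => le_trans huv (hroots i hi))]
  apply mul_le_mul (Real.rpow_le_rpow (by linarith) (by linarith) hb)
    (Finset.prod_le_prod (fun i hi => by linarith [hroots i hi]) (fun i hi => by linarith))
    (Finset.prod_nonneg fun i hi => by linarith [hroots i hi])
    (Real.rpow_nonneg (by linarith) b)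

theorem split_product_sup_eq (a b : ℝ) (ha : 0 ≤ a) (hb : 0 ≤ b) (l1 l2 : ℕ)
    (hm : 1 ≤ l1 + l2) (ξ : ℕ → ℝ)
    (hξmono : ∀ i, i + 1 < l1 + l2 → ξ i < ξ (i + 1))
    (hξmem : ∀ i < l1 + l2, ξ i ∈ Set.Ioo (0 : ℝ) 1)
    (hext : intervalSup a b (∏ i ∈ Finset.range (l1 + l2),
        (Polynomial.X - Polynomial.C (ξ i))) = devE (l1 + l2) a b)
    (η : Fin (l1 + l2 + 1) → ℝ) (hηmono : StrictMono η)
    (hηmem : ∀ k, η k ∈ Set.Icc (0 : ℝ) 1)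
    (halt : ∀ k : Fin (l1 + l2 + 1),
      η k ^ a * (1 - η k) ^ b *
          Polynomial.eval (η k)
            (∏ i ∈ Finset.range (l1 + l2), (Polynomial.X - Polynomial.C (ξ i))) =
        (-1 : ℝ) ^ (l1 + l2 - (k : ℕ)) * devE (l1 + l2) a b) :
    sSup ((fun t : ℝ × ℝ => t.1 ^ a * t.2 ^ b *
        |∏ i ∈ Finset.range l1, (t.1 - ξ i)| *
        |∏ i ∈ Finset.Ico l1 (l1 + l2), (1 - t.2 - ξ i)|) '' triangle) =
      devE (l1 + l2) a b := by
  classical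
  set E := devE (l1+l2) a b with hEdef
  set p : Polynomial ℝ := ∏ i ∈ Finset.range (l1+l2), (Polynomial.X - Polynomial.C (ξ i)) with hpdef
  unfold intervalSup at hext
  have hl1m : l1 ≤ (l1+l2) := Nat.le_add_right l1 l2
  have hpeval : ∀ t : ℝ, p.eval t = ∏ i ∈ Finset.range (l1+l2), (t - ξ i) := by
    intro t; simp [hpdef, Polynomial.eval_prod]
  have hξm : ∀ i j, i < j → j < (l1+l2) → ξ i < ξ j := by
    intro i j hij hj
    induction j with
    | zero => omega
    | succ n ih =>
      rcases Nat.lt_or_ge i n with h | h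
      · exact lt_trans (ih h (by omega)) (hξmono n hj)
      · have hin : i = n := by omega
        subst hin; exact hξmono i hj
  have hWcont : Continuous (fun t : ℝ => t ^ a * (1 - t) ^ b * |p.eval t|) := by
    have h1 : Continuous fun t : ℝ => t ^ a :=
      continuous_iff_continuousAt.2 fun x => Real.continuousAt_rpow_const x a (Or.inr ha)
    have h2 : Continuous fun t : ℝ => (1 - t) ^ b := by
      have h3 : Continuous fun t : ℝ => t ^ b :=
        continuous_iff_continuousAt.2 fun x => Real.continuousAt_rpow_const x b (Or.inr hb)
      exact h3.comp (continuous_const.sub continuous_id)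
    exact (h1.mul h2).mul (Polynomial.continuous p).abs
  have hbdd : BddAbove ((fun t : ℝ => t ^ a * (1 - t) ^ b * |p.eval t|) '' Set.Icc (0:ℝ) 1) :=
    isCompact_Icc.bddAbove_image hWcont.continuousOn
  have hub : ∀ t ∈ Set.Icc (0:ℝ) 1, t ^ a * (1 - t) ^ b * |p.eval t| ≤ E := by
    intro t ht
    have h := le_csSup hbdd (Set.mem_image_of_mem _ ht)
    rwa [hext] at h
  have hEpos : 0 < E := by
    obtain ⟨t0, ht0, ht0n⟩ := (Set.infinite_coe_iff.mp
      (Set.Ioo.infinite (by norm_num : (0:ℝ) < 1))).exists_notMem_finset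
      ((Finset.range (l1+l2)).image ξ)
    refine lt_of_lt_of_le ?_ (hub t0 ⟨le_of_lt ht0.1, le_of_lt ht0.2⟩)
    have h1 : 0 < |p.eval t0| := by
      rw [hpeval, abs_pos, Finset.prod_ne_zero_iff]
      intro i hi hcon
      exact ht0n (Finset.mem_image.2 ⟨i, hi, by linarith⟩)
    have h2 := Real.rpow_pos_of_pos ht0.1 a
    have h3 := Real.rpow_pos_of_pos (by linarith [ht0.2] : (0:ℝ) < 1 - t0) b
    exact mul_pos (mul_pos h2 h3) h1
  have hWfg : ∀ t : ℝ, t ^ a * (1 - t) ^ b * |p.eval t| =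
      (t ^ a * |∏ i ∈ Finset.range l1, (t - ξ i)|) *
        ((1 - t) ^ b * |∏ i ∈ Finset.Ico l1 (l1+l2), (t - ξ i)|) := by
    intro t
    rw [hpeval, ← Finset.prod_range_mul_prod_Ico (fun i => t - ξ i) hl1m, abs_mul]
    ring
  have hWle : ∀ t : ℝ, 0 ≤ t → t ≤ 1 →
      (t ^ a * |∏ i ∈ Finset.range l1, (t - ξ i)|) *
        ((1 - t) ^ b * |∏ i ∈ Finset.Ico l1 (l1+l2), (t - ξ i)|) ≤ E := by
    intro t h0 h1; rw [← hWfg]; exact hub t ⟨h0, h1⟩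
  have hfnn : ∀ w : ℝ, 0 ≤ w → 0 ≤ w ^ a * |∏ i ∈ Finset.range l1, (w - ξ i)| :=
    fun w hw => mul_nonneg (Real.rpow_nonneg hw a) (abs_nonneg _)
  have hgnn : ∀ w : ℝ, w ≤ 1 → 0 ≤ (1 - w) ^ b * |∏ i ∈ Finset.Ico l1 (l1+l2), (w - ξ i)| :=
    fun w hw => mul_nonneg (Real.rpow_nonneg (by linarith) b) (abs_nonneg _)
  -- the key pointwise bound
  have hkey : ∀ u v : ℝ, 0 ≤ u → u ≤ v → v ≤ 1 →
      (u ^ a * |∏ i ∈ Finset.range l1, (u - ξ i)|) *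
        ((1 - v) ^ b * |∏ i ∈ Finset.Ico l1 (l1+l2), (v - ξ i)|) ≤ E := by
    intro u v hu huv hv1
    by_cases hA : ∀ i ∈ Finset.range l1, ξ i ≤ u
    · calc (u ^ a * |∏ i ∈ Finset.range l1, (u - ξ i)|) *
            ((1 - v) ^ b * |∏ i ∈ Finset.Ico l1 (l1+l2), (v - ξ i)|)
          ≤ (v ^ a * |∏ i ∈ Finset.range l1, (v - ξ i)|) *
            ((1 - v) ^ b * |∏ i ∈ Finset.Ico l1 (l1+l2), (v - ξ i)|) :=
          mul_le_mul_of_nonneg_right (f_monotone a ha ξ l1 hu huv hA) (hgnn v hv1)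
        _ ≤ E := hWle v (le_trans hu huv) hv1
    · by_cases hB : ∀ i ∈ Finset.Ico l1 (l1+l2), v ≤ ξ i
      · calc (u ^ a * |∏ i ∈ Finset.range l1, (u - ξ i)|) *
              ((1 - v) ^ b * |∏ i ∈ Finset.Ico l1 (l1+l2), (v - ξ i)|)
            ≤ (u ^ a * |∏ i ∈ Finset.range l1, (u - ξ i)|) *
              ((1 - u) ^ b * |∏ i ∈ Finset.Ico l1 (l1+l2), (u - ξ i)|) :=
            mul_le_mul_of_nonneg_left (g_antitone b hb ξ l1 (l1+l2) hu huv hv1 hB) (hfnn u hu)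
          _ ≤ E := hWle u hu (le_trans huv hv1)
      · push_neg at hA hB
        obtain ⟨i0, hi0, hi0u⟩ := hA
        obtain ⟨i1, hi1, hi1v⟩ := hB
        have hi0' := Finset.mem_range.mp hi0
        have hi1' := Finset.mem_Ico.mp hi1
        have hl1pos : 1 ≤ l1 := by omega
        have hl1lt : l1 < (l1+l2) := by omega
        have hle_f : ∀ i ∈ Finset.range l1, ξ i ≤ ξ (l1 - 1) := by
          intro i hi
          have h := Finset.mem_range.mp hi
          rcases Nat.lt_or_ge i (l1-1) with h2 | h2
          · exact le_of_lt (hξm _ _ h2 (by omega))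
          · have : i = l1 - 1 := by omega
            rw [this]
        have hle_g : ∀ i ∈ Finset.Ico l1 (l1+l2), ξ l1 ≤ ξ i := by
          intro i hi
          have h := Finset.mem_Ico.mp hi
          rcases Nat.lt_or_ge l1 i with h2 | h2
          · exact le_of_lt (hξm _ _ h2 h.2)
          · have : i = l1 := by omega
            rw [this]
        have hu' : u < ξ (l1 - 1) := lt_of_lt_of_le hi0u (hle_f i0 hi0)
        have hv' : ξ l1 < v := lt_of_le_of_lt (hle_g i1 hi1) hi1v
        -- the equioscillation point between ξ (l1-1) and ξ l1
        set η' : ℕ → ℝ := fun k => η ⟨min k (l1+l2), Nat.lt_succ_of_le (min_le_right k (l1+l2))⟩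
          with hη'def
        have hη'eq : ∀ (k : ℕ) (hk : k ≤ (l1+l2)), η' k = η ⟨k, Nat.lt_succ_of_le hk⟩ := by
          intro k hk
          simp only [hη'def]
          exact congrArg η (Fin.ext (by simp [min_eq_left hk]))
        have hη'mem : ∀ k, 0 ≤ η' k ∧ η' k ≤ 1 := by
          intro k
          simp only [hη'def]
          exact ⟨(hηmem _).1, (hηmem _).2⟩
        have hη'mono : ∀ k l, k < l → l ≤ (l1+l2) → η' k < η' l := by
          intro k l hkl hl
          rw [hη'eq k (by omega), hη'eq l hl]
          exact hηmono (by simp only [Fin.mk_lt_mk]; omega)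
        have halt' : ∀ (k : ℕ) (hk : k ≤ (l1+l2)),
            η' k ^ a * (1 - η' k) ^ b * p.eval (η' k) = (-1 : ℝ) ^ ((l1+l2) - k) * E := by
          intro k hk
          rw [hη'eq k hk]
          have h := halt ⟨k, Nat.lt_succ_of_le hk⟩
          simpa using h
        have hsign : ∀ k, k < (l1+l2) → p.eval (η' k) * p.eval (η' (k+1)) < 0 := by
          intro k hk
          have e0 := halt' k (by omega)
          have e1 := halt' (k+1) (by omega)
          have hpow : ((-1:ℝ)) ^ ((l1+l2) - k) * ((-1:ℝ)) ^ ((l1+l2) - (k+1)) = -1 := by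
            have h1 : (l1+l2) - k = ((l1+l2) - (k+1)) + 1 := by omega
            rw [h1, ← pow_add]
            exact Odd.neg_one_pow ⟨(l1+l2) - (k+1), by omega⟩
          have hmul : (η' k ^ a * (1 - η' k) ^ b * p.eval (η' k)) *
              (η' (k+1) ^ a * (1 - η' (k+1)) ^ b * p.eval (η' (k+1))) = -(E^2) := by
            rw [e0, e1]
            calc ((-1:ℝ)) ^ ((l1+l2) - k) * E * (((-1:ℝ)) ^ ((l1+l2) - (k+1)) * E)
                = ((-1:ℝ)) ^ ((l1+l2) - k) * ((-1:ℝ)) ^ ((l1+l2) - (k+1)) * E ^ 2 := by ring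
              _ = -(E^2) := by rw [hpow]; ring
          have hc0 : 0 ≤ η' k ^ a * (1 - η' k) ^ b :=
            mul_nonneg (Real.rpow_nonneg (hη'mem k).1 a)
              (Real.rpow_nonneg (by linarith [(hη'mem k).2]) b)
          have hc1 : 0 ≤ η' (k+1) ^ a * (1 - η' (k+1)) ^ b :=
            mul_nonneg (Real.rpow_nonneg (hη'mem (k+1)).1 a)
              (Real.rpow_nonneg (by linarith [(hη'mem (k+1)).2]) b)
          by_contra hcon
          push_neg at hcon
          have h2 : 0 ≤ (η' k ^ a * (1 - η' k) ^ b * p.eval (η' k)) *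
              (η' (k+1) ^ a * (1 - η' (k+1)) ^ b * p.eval (η' (k+1))) := by
            have e2 : (η' k ^ a * (1 - η' k) ^ b * p.eval (η' k)) *
                (η' (k+1) ^ a * (1 - η' (k+1)) ^ b * p.eval (η' (k+1))) =
                ((η' k ^ a * (1 - η' k) ^ b) * (η' (k+1) ^ a * (1 - η' (k+1)) ^ b)) *
                  (p.eval (η' k) * p.eval (η' (k+1))) := by ring
            rw [e2]
            exact mul_nonneg (mul_nonneg hc0 hc1) hcon
          rw [hmul] at h2
          nlinarith [hEpos]
        have hroot : ∀ k < (l1+l2), ∃ i < (l1+l2), η' k < ξ i ∧ ξ i < η' (k + 1) := by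
          intro k hk
          have hs := hsign k hk
          have hlt : η' k < η' (k+1) := hη'mono k (k+1) (by omega) (by omega)
          have hivt : ∃ x ∈ Set.Ioo (η' k) (η' (k+1)), p.eval x = 0 := by
            rcases lt_or_ge (p.eval (η' k)) 0 with h | h
            · have h2 : 0 < p.eval (η' (k+1)) := by nlinarith
              obtain ⟨x, hx, hx0⟩ := intermediate_value_Ioo (le_of_lt hlt)
                (Polynomial.continuous p).continuousOn (Set.mem_Ioo.2 ⟨h, h2⟩)
              exact ⟨x, hx, hx0⟩
            · have hne : p.eval (η' k) ≠ 0 := by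
                intro he
                rw [he, zero_mul] at hs
                exact lt_irrefl 0 hs
              have h0 : 0 < p.eval (η' k) := lt_of_le_of_ne h (Ne.symm hne)
              have h2 : p.eval (η' (k+1)) < 0 := by nlinarith
              obtain ⟨x, hx, hx0⟩ := intermediate_value_Ioo' (le_of_lt hlt)
                (Polynomial.continuous p).continuousOn (Set.mem_Ioo.2 ⟨h2, h0⟩)
              exact ⟨x, hx, hx0⟩
          obtain ⟨x, hx, hx0⟩ := hivt
          rw [hpeval] at hx0
          obtain ⟨i, hi, hix⟩ := Finset.prod_eq_zero_iff.mp hx0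
          have hxi : ξ i = x := by linarith [sub_eq_zero.mp hix]
          exact ⟨i, Finset.mem_range.mp hi, by rw [hxi]; exact hx.1, by rw [hxi]; exact hx.2⟩
        have hint := interlace_aux (l1+l2) ξ hξm η' hη'mono hroot
        set s := η' l1 with hsdef
        have hs1 : ξ (l1 - 1) < s := by
          have h := (hint (l1-1) (by omega)).2
          have he : l1 - 1 + 1 = l1 := by omega
          rwa [he] at h
        have hs2 : s < ξ l1 := (hint l1 hl1lt).1
        have hspos : 0 < s := lt_trans (hξmem (l1-1) (by omega)).1 hs1
        have hslt1 : s < 1 := lt_trans hs2 (hξmem l1 hl1lt).2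
        have hWs : (s ^ a * |∏ i ∈ Finset.range l1, (s - ξ i)|) *
            ((1 - s) ^ b * |∏ i ∈ Finset.Ico l1 (l1+l2), (s - ξ i)|) = E := by
          rw [← hWfg]
          have habs : |s ^ a * (1 - s) ^ b * p.eval s| = E := by
            rw [halt' l1 (by omega), abs_mul, abs_pow, abs_neg, abs_one, one_pow, one_mul,
              abs_of_pos hEpos]
          rw [← habs, abs_mul, abs_of_nonneg (mul_nonneg (Real.rpow_nonneg hspos.le a)
            (Real.rpow_nonneg (by linarith) b))]
        have hfs : 0 < s ^ a * |∏ i ∈ Finset.range l1, (s - ξ i)| := by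
          apply mul_pos (Real.rpow_pos_of_pos hspos a)
          rw [abs_pos, Finset.prod_ne_zero_iff]
          intro i hi hcon
          have := hle_f i hi
          have := sub_eq_zero.mp hcon
          linarith
        have hgs : 0 < (1 - s) ^ b * |∏ i ∈ Finset.Ico l1 (l1+l2), (s - ξ i)| := by
          apply mul_pos (Real.rpow_pos_of_pos (by linarith) b)
          rw [abs_pos, Finset.prod_ne_zero_iff]
          intro i hi hcon
          have := hle_g i hi
          have := sub_eq_zero.mp hcon
          linarith
        have hfu : u ^ a * |∏ i ∈ Finset.range l1, (u - ξ i)| ≤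
            s ^ a * |∏ i ∈ Finset.range l1, (s - ξ i)| := by
          have h1 : (1 - s) ^ b * |∏ i ∈ Finset.Ico l1 (l1+l2), (s - ξ i)| ≤
              (1 - u) ^ b * |∏ i ∈ Finset.Ico l1 (l1+l2), (u - ξ i)| :=
            g_antitone b hb ξ l1 (l1+l2) hu (by linarith) hslt1.le
              (fun i hi => le_trans hs2.le (hle_g i hi))
          have h2 : (u ^ a * |∏ i ∈ Finset.range l1, (u - ξ i)|) *
              ((1 - s) ^ b * |∏ i ∈ Finset.Ico l1 (l1+l2), (s - ξ i)|) ≤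
              (s ^ a * |∏ i ∈ Finset.range l1, (s - ξ i)|) *
              ((1 - s) ^ b * |∏ i ∈ Finset.Ico l1 (l1+l2), (s - ξ i)|) := by
            calc (u ^ a * |∏ i ∈ Finset.range l1, (u - ξ i)|) *
                ((1 - s) ^ b * |∏ i ∈ Finset.Ico l1 (l1+l2), (s - ξ i)|)
                ≤ (u ^ a * |∏ i ∈ Finset.range l1, (u - ξ i)|) *
                  ((1 - u) ^ b * |∏ i ∈ Finset.Ico l1 (l1+l2), (u - ξ i)|) :=
                mul_le_mul_of_nonneg_left h1 (hfnn u hu)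
              _ ≤ E := hWle u hu (by have := (hξmem (l1-1) (show l1 - 1 < l1+l2 by omega)).2; linarith)
              _ = _ := hWs.symm
          exact le_of_mul_le_mul_right h2 hgs
        have hgv : (1 - v) ^ b * |∏ i ∈ Finset.Ico l1 (l1+l2), (v - ξ i)| ≤
            (1 - s) ^ b * |∏ i ∈ Finset.Ico l1 (l1+l2), (s - ξ i)| := by
          have h1 : s ^ a * |∏ i ∈ Finset.range l1, (s - ξ i)| ≤
              v ^ a * |∏ i ∈ Finset.range l1, (v - ξ i)| :=
            f_monotone a ha ξ l1 hspos.le (by linarith)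
              (fun i hi => le_trans (hle_f i hi) hs1.le)
          have h2 : (s ^ a * |∏ i ∈ Finset.range l1, (s - ξ i)|) *
              ((1 - v) ^ b * |∏ i ∈ Finset.Ico l1 (l1+l2), (v - ξ i)|) ≤
              (s ^ a * |∏ i ∈ Finset.range l1, (s - ξ i)|) *
              ((1 - s) ^ b * |∏ i ∈ Finset.Ico l1 (l1+l2), (s - ξ i)|) := by
            calc (s ^ a * |∏ i ∈ Finset.range l1, (s - ξ i)|) *
                ((1 - v) ^ b * |∏ i ∈ Finset.Ico l1 (l1+l2), (v - ξ i)|)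
                ≤ (v ^ a * |∏ i ∈ Finset.range l1, (v - ξ i)|) *
                  ((1 - v) ^ b * |∏ i ∈ Finset.Ico l1 (l1+l2), (v - ξ i)|) :=
                mul_le_mul_of_nonneg_right h1 (hgnn v hv1)
              _ ≤ E := hWle v (by linarith [(hξmem l1 hl1lt).1]) hv1
              _ = _ := hWs.symm
          exact (mul_le_mul_iff_right₀ hfs).mp h2
        calc (u ^ a * |∏ i ∈ Finset.range l1, (u - ξ i)|) *
            ((1 - v) ^ b * |∏ i ∈ Finset.Ico l1 (l1+l2), (v - ξ i)|)
            ≤ (s ^ a * |∏ i ∈ Finset.range l1, (s - ξ i)|) *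
              ((1 - s) ^ b * |∏ i ∈ Finset.Ico l1 (l1+l2), (s - ξ i)|) :=
            mul_le_mul hfu hgv (hgnn v hv1) hfs.le
          _ = E := hWs
  -- upper bound over the triangle
  have hFub : ∀ x ∈ (fun t : ℝ × ℝ => t.1 ^ a * t.2 ^ b *
      |∏ i ∈ Finset.range l1, (t.1 - ξ i)| *
      |∏ i ∈ Finset.Ico l1 (l1+l2), (1 - t.2 - ξ i)|) '' triangle, x ≤ E := by
    rintro x ⟨⟨t1, t2⟩, ⟨h1, h2, h3⟩, rfl⟩
    have hk := hkey t1 (1 - t2) h1 (by simp only at h1 h2 h3 ⊢; linarith)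
      (by simp only at h1 h2 h3 ⊢; linarith)
    have e1 : ((1:ℝ) - (1 - t2)) = t2 := by ring
    rw [e1] at hk
    calc t1 ^ a * t2 ^ b * |∏ i ∈ Finset.range l1, (t1 - ξ i)| *
        |∏ i ∈ Finset.Ico l1 (l1+l2), (1 - t2 - ξ i)|
        = (t1 ^ a * |∏ i ∈ Finset.range l1, (t1 - ξ i)|) *
          (t2 ^ b * |∏ i ∈ Finset.Ico l1 (l1+l2), (1 - t2 - ξ i)|) := by ring
      _ ≤ E := hk
  refine le_antisymm (csSup_le ?_ hFub) ?_
  · exact ⟨_, Set.mem_image_of_mem _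
      (show ((0:ℝ), (0:ℝ)) ∈ triangle from ⟨le_refl 0, le_refl 0, by norm_num⟩)⟩
  · rw [← hext]
    apply csSup_le_csSup ⟨E, fun x hx => hFub x hx⟩
      ((Set.nonempty_Icc.2 (by norm_num)).image _)
    rintro x ⟨t, ht, rfl⟩
    refine ⟨(t, 1 - t), ⟨ht.1, by simp only; linarith [ht.2], by simp only; linarith⟩, ?_⟩
    have e : ∀ i : ℕ, 1 - (1 - t) - ξ i = t - ξ i := fun i => by ring
    simp only [e]
    rw [hWfg t]
    ring
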